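/- Let C_D, S_D be the homogeneous degree-D polynomials with C_D(cos θ, sin θ) = cos(Dθ), S_D(cos θ, sin θ) = sin(Dθ). Then det [[∂C_D/∂c, ∂C_D/∂s], [c, s]] = D · S_D(c, s) as an identity of polynomials in c and s. -/

import Mathlib

open MvPolynomial Real

lemma aux_eval_smul {n : ℕ} {p : MvPolynomial (Fin 2) ℝ} (hp : p.IsHomogeneous n)
    (r : ℝ) (x : Fin 2 → ℝ) : eval (r • x) p = r ^ n * eval x p := by
  rw [eval_eq', eval_eq', Finset.mul_sum]
  refine Finset.sum_congr rfl fun d hd => ?_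
  have hdeg : ∑ i, d i = n := by
    have h1 : (Finsupp.weight 1) d = n := hp (mem_support_iff.mp hd)
    replace h1 : Finsupp.degree d = n := by rw [Finsupp.degree_eq_weight_one]; exact h1
    rw [← h1, Finsupp.degree]
    exact (Finset.sum_subset (Finset.subset_univ _)
      (fun i _ hi => Finsupp.notMem_support_iff.mp hi)).symm
  have h2 : ∏ i, (r • x) i ^ d i = r ^ n * ∏ i, x i ^ d i := by
    simp only [Pi.smul_apply, smul_eq_mul, mul_pow]
    rw [Finset.prod_mul_distrib, Finset.prod_pow_eq_pow_sum, hdeg]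
  rw [h2]; ring

lemma aux_pderiv_homog {n : ℕ} {p : MvPolynomial (Fin 2) ℝ} (hp : p.IsHomogeneous n)
    (i : Fin 2) : (pderiv i p).IsHomogeneous (n - 1) := by
  rw [p.as_sum, map_sum]
  rw [← mem_homogeneousSubmodule]
  refine Submodule.sum_mem _ fun d hd => ?_
  rw [mem_homogeneousSubmodule, pderiv_monomial]
  by_cases h0 : d i = 0
  · simp only [h0, Nat.cast_zero, mul_zero, map_zero]
    exact isHomogeneous_zero _ _ _
  · apply isHomogeneous_monomial
    have hw : (Finsupp.weight 1) d = n := hp (mem_support_iff.mp hd)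
    have hle : Finsupp.single i 1 ≤ d := Finsupp.single_le_iff.mpr (by omega)
    have hsum : d - Finsupp.single i 1 + Finsupp.single i 1 = d :=
      tsub_add_cancel_of_le hle
    have hws : (Finsupp.weight 1) (Finsupp.single i (1:ℕ)) = 1 := by
      simp [Finsupp.weight_apply, Finsupp.sum_single_index]
    have hkey : (Finsupp.weight 1) (d - Finsupp.single i 1) + 1 = n := by
      have h3 := congrArg (fun e => (Finsupp.weight (1 : Fin 2 → ℕ)) e) hsum
      simp only [map_add, hws, hw] at h3
      exact h3
    rw [Finsupp.degree_eq_weight_one]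
    show (Finsupp.weight 1) (d - Finsupp.single i 1) = n - 1
    omega

lemma aux_hasDerivAt (p : MvPolynomial (Fin 2) ℝ) (θ : ℝ) :
    HasDerivAt (fun t => eval ![Real.cos t, Real.sin t] p)
      (eval ![Real.cos θ, Real.sin θ] (pderiv 0 p) * (-Real.sin θ) +
        eval ![Real.cos θ, Real.sin θ] (pderiv 1 p) * Real.cos θ) θ := by
  induction p using MvPolynomial.induction_on with
  | C a => simpa using hasDerivAt_const θ a
  | add p q hp hq =>
    have h := hp.add hq
    have hval : eval ![Real.cos θ, Real.sin θ] (pderiv 0 (p + q)) * (-Real.sin θ) +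
        eval ![Real.cos θ, Real.sin θ] (pderiv 1 (p + q)) * Real.cos θ =
        (eval ![Real.cos θ, Real.sin θ] (pderiv 0 p) * (-Real.sin θ) +
          eval ![Real.cos θ, Real.sin θ] (pderiv 1 p) * Real.cos θ) +
        (eval ![Real.cos θ, Real.sin θ] (pderiv 0 q) * (-Real.sin θ) +
          eval ![Real.cos θ, Real.sin θ] (pderiv 1 q) * Real.cos θ) := by
      simp only [map_add, eval_add]; ring
    rw [hval]
    exact h.congr_of_eventuallyEq (by filter_upwards with t; simp)
  | mul_X p i hp =>
    fin_cases i
    · have h := hp.mul (Real.hasDerivAt_cos θ)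
      have hval : eval ![Real.cos θ, Real.sin θ] (pderiv 0 (p * X 0)) * (-Real.sin θ) +
          eval ![Real.cos θ, Real.sin θ] (pderiv 1 (p * X 0)) * Real.cos θ =
          (eval ![Real.cos θ, Real.sin θ] (pderiv 0 p) * (-Real.sin θ) +
            eval ![Real.cos θ, Real.sin θ] (pderiv 1 p) * Real.cos θ) * Real.cos θ +
          eval ![Real.cos θ, Real.sin θ] p * (-Real.sin θ) := by
        simp [pderiv_mul, pderiv_X, Pi.single_apply]; ring
      simp only [Fin.zero_eta, Fin.isValue]
      rw [hval]
      exact h.congr_of_eventuallyEq (by filter_upwards with t; simp)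
    · have h := hp.mul (Real.hasDerivAt_sin θ)
      have hval : eval ![Real.cos θ, Real.sin θ] (pderiv 0 (p * X 1)) * (-Real.sin θ) +
          eval ![Real.cos θ, Real.sin θ] (pderiv 1 (p * X 1)) * Real.cos θ =
          (eval ![Real.cos θ, Real.sin θ] (pderiv 0 p) * (-Real.sin θ) +
            eval ![Real.cos θ, Real.sin θ] (pderiv 1 p) * Real.cos θ) * Real.sin θ +
          eval ![Real.cos θ, Real.sin θ] p * Real.cos θ := by
        simp [pderiv_mul, pderiv_X, Pi.single_apply]; ring
      simp only [Fin.mk_one, Fin.isValue]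
      rw [hval]
      exact h.congr_of_eventuallyEq (by filter_upwards with t; simp)

theorem stmt_14 (D : ℕ) (hD : 1 ≤ D) (C S : MvPolynomial (Fin 2) ℝ)
    (hC : C.IsHomogeneous D) (hS : S.IsHomogeneous D)
    (hCe : ∀ θ : ℝ, MvPolynomial.eval ![Real.cos θ, Real.sin θ] C = Real.cos (D * θ))
    (hSe : ∀ θ : ℝ, MvPolynomial.eval ![Real.cos θ, Real.sin θ] S = Real.sin (D * θ)) :
    MvPolynomial.pderiv 0 C * MvPolynomial.X 1 -
        MvPolynomial.pderiv 1 C * MvPolynomial.X 0 =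
      (D : MvPolynomial (Fin 2) ℝ) * S := by
  set L : MvPolynomial (Fin 2) ℝ :=
    pderiv 0 C * X 1 - pderiv 1 C * X 0 with hL
  set Rp : MvPolynomial (Fin 2) ℝ := (D : MvPolynomial (Fin 2) ℝ) * S with hR
  have hCd : (pderiv 0 C).IsHomogeneous (D - 1) := aux_pderiv_homog hC 0
  have hCd1 : (pderiv 1 C).IsHomogeneous (D - 1) := aux_pderiv_homog hC 1
  have hLh : L.IsHomogeneous D := by
    have h1 : (pderiv 0 C * X 1).IsHomogeneous D := by
      have := hCd.mul (isHomogeneous_X ℝ (1 : Fin 2))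
      rwa [Nat.sub_add_cancel hD] at this
    have h2 : (pderiv 1 C * X 0).IsHomogeneous D := by
      have := hCd1.mul (isHomogeneous_X ℝ (0 : Fin 2))
      rwa [Nat.sub_add_cancel hD] at this
    exact h1.sub h2
  have hRh : Rp.IsHomogeneous D := by
    rw [hR, ← MvPolynomial.C_eq_coe_nat]
    exact hS.C_mul _
  have hcirc : ∀ θ : ℝ, eval ![Real.cos θ, Real.sin θ] L = eval ![Real.cos θ, Real.sin θ] Rp := by
    intro θ
    have h1 := aux_hasDerivAt C θ
    have h2 : HasDerivAt (fun t : ℝ => Real.cos (D * t)) (-(D * Real.sin (D * θ))) θ := by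
      have := ((hasDerivAt_id θ).const_mul (D : ℝ)).cos
      simpa [mul_comm] using this
    have h1' : HasDerivAt (fun t : ℝ => Real.cos (D * t))
        (eval ![Real.cos θ, Real.sin θ] (pderiv 0 C) * (-Real.sin θ) +
          eval ![Real.cos θ, Real.sin θ] (pderiv 1 C) * Real.cos θ) θ :=
      h1.congr_of_eventuallyEq (by filter_upwards with t; rw [hCe t])
    have key := h1'.unique h2
    rw [hL, hR]
    simp only [eval_sub, eval_mul, eval_X, map_mul, map_natCast,
      Matrix.cons_val_zero, Matrix.cons_val_one, Matrix.head_cons]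
    rw [hSe θ]
    nlinarith [key]
  have hall : ∀ x : Fin 2 → ℝ, eval x L = eval x Rp := by
    intro x
    by_cases hx : x 0 = 0 ∧ x 1 = 0
    · have hx0 : x = (0 : ℝ) • ![Real.cos 0, Real.sin 0] := by
        funext i; fin_cases i <;> simp [hx.1, hx.2]
      rw [hx0, aux_eval_smul hLh, aux_eval_smul hRh,
        zero_pow (by omega), zero_mul, zero_mul]
    · set z : ℂ := ⟨x 0, x 1⟩ with hz
      have hz0 : z ≠ 0 := by
        intro h
        exact hx ⟨by simpa [hz] using congrArg Complex.re h,
          by simpa [hz] using congrArg Complex.im h⟩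
      have habs : (0:ℝ) < ‖z‖ := by
        exact norm_pos_iff.mpr hz0
      have hx0 : x = (‖z‖ : ℝ) • ![Real.cos z.arg, Real.sin z.arg] := by
        funext i
        fin_cases i
        · simp only [Pi.smul_apply, Matrix.cons_val_zero, smul_eq_mul,
            Complex.cos_arg hz0]
          rw [hz]
          simp only [Fin.zero_eta, Fin.isValue, Matrix.cons_val_zero]
          rw [← hz]
          field_simp [habs.ne']
        · simp only [Pi.smul_apply, Matrix.cons_val_one, Matrix.head_cons, smul_eq_mul,
            Complex.sin_arg]
          rw [hz]
          simp only [Fin.mk_one, Fin.isValue, Matrix.cons_val_one, Matrix.head_cons,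
            Matrix.cons_val_zero]
          rw [← hz]
          field_simp [habs.ne']
      rw [hx0, aux_eval_smul hLh, aux_eval_smul hRh, hcirc]
  exact MvPolynomial.funext hall
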